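/- Critical-pair-closing systems for abstract rewrite systems: let a and d be binary relations on a type α such that (1) d is a subrelation of a (d x y implies a x y), and (2) d is critical-pair-closing for a: for every local peak s ←_a u →_a t, s and t are d-convertible, i.e., s ↔*_d t. If d is confluent, then a is confluent. -/

import Mathlib

/-- Conversion: reflexive–transitive closure of the symmetric closure. -/
def Conv {α : Type*} (r : α → α → Prop) : α → α → Prop :=
  Relation.ReflTransGen (fun a b => r a b ∨ r b a)

/-- Critical-pair-closing systems for ARSs: if `d ⊆ a`, every local `a`-peak is
`d`-convertible, and `d` is confluent, then `a` is confluent. -/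
theorem stmt_6 {α : Type*} (a d : α → α → Prop)
    (hsub : ∀ x y, d x y → a x y)
    (hclose : ∀ u s t, a u s → a u t → Conv d s t)
    (hdconf : ∀ x y z, Relation.ReflTransGen d x y → Relation.ReflTransGen d x z →
      ∃ w, Relation.ReflTransGen d y w ∧ Relation.ReflTransGen d z w) :
    ∀ x y z, Relation.ReflTransGen a x y → Relation.ReflTransGen a x z →
      ∃ w, Relation.ReflTransGen a y w ∧ Relation.ReflTransGen a z w := by
  set S := Relation.ReflTransGen d with hS
  set A := Relation.ReflTransGen a with hA
  have hSA : ∀ x y, S x y → A x y := fun x y h =>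
    Relation.ReflTransGen.mono (fun p q => hsub p q) x y h
  -- Church-Rosser for d: conversion implies joinability
  have hCR : ∀ s t, Conv d s t → ∃ w, S s w ∧ S t w := by
    intro s t h
    induction h using Relation.ReflTransGen.head_induction_on with
    | refl => exact ⟨t, Relation.ReflTransGen.refl, Relation.ReflTransGen.refl⟩
    | head hstep _ ih =>
      rename_i s x _
      obtain ⟨w, hxw, htw⟩ := ih
      rcases hstep with hsx | hxs
      · exact ⟨w, Relation.ReflTransGen.head hsx hxw, htw⟩
      · obtain ⟨w', hsw', hww'⟩ :=
          hdconf x s w (Relation.ReflTransGen.single hxs) hxw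
        exact ⟨w', hsw', htw.trans hww'⟩
  -- closing of local a-a peaks by d-joins
  have hF1 : ∀ u s t, a u s → a u t → ∃ w, S s w ∧ S t w := by
    intro u s t h1 h2
    exact hCR s t (hclose u s t h1 h2)
  -- Key lemma J': strip an S-step against a*, closing with S on the far side.
  have hJ : ∀ u t, A u t → ∀ v, S u v → ∃ w, A v w ∧ S t w := by
    intro u t hAut
    induction hAut using Relation.ReflTransGen.head_induction_on with
    | refl =>
      intro v hSuv
      exact ⟨v, Relation.ReflTransGen.refl, hSuv⟩
    | head hstep hrest ih =>
      rename_i u x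
      intro v hSuv
      -- peak: S u v  versus  a u x
      rcases Relation.ReflTransGen.cases_head hSuv with rfl | ⟨z, huz, hzv⟩
      · -- v = u : follow the a-step
        obtain ⟨w, hxw, htw⟩ := ih x Relation.ReflTransGen.refl
        exact ⟨w, Relation.ReflTransGen.head hstep hxw, htw⟩
      · -- u →d z →d* v  and  u →a x
        obtain ⟨p, hzp, hxp⟩ := hF1 u z x (hsub u z huz) hstep
        obtain ⟨y, hvy, hpy⟩ := hdconf z v p hzv hzp
        have hxy : S x y := hxp.trans hpy
        obtain ⟨w, hyw, htw⟩ := ih y hxy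
        exact ⟨w, (hSA v y hvy).trans hyw, htw⟩
  -- Strip lemma for a single a-step against a*
  have hK : ∀ u v t, a u v → A u t → ∃ w, A v w ∧ A t w := by
    intro u v t hav hAut
    rcases Relation.ReflTransGen.cases_head hAut with rfl | ⟨x, hux, hxt⟩
    · exact ⟨v, Relation.ReflTransGen.refl, Relation.ReflTransGen.single hav⟩
    · obtain ⟨y, hvy, hxy⟩ := hF1 u v x hav hux
      obtain ⟨w, hyw, htw⟩ := hJ x t hxt y hxy
      exact ⟨w, (hSA v y hvy).trans hyw, hSA t w htw⟩
  -- Confluence of a by induction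
  intro x y z hxy hxz
  induction hxy using Relation.ReflTransGen.head_induction_on generalizing z with
  | refl => exact ⟨z, hxz, Relation.ReflTransGen.refl⟩
  | head hstep hrest ih =>
    rename_i x v
    obtain ⟨w1, hvw1, hzw1⟩ := hK x v z hstep hxz
    obtain ⟨w, hyw, hw1w⟩ := ih w1 hvw1
    exact ⟨w, hyw, hzw1.trans hw1w⟩
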